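/- Let K ≥ 1 and let B be the (K+1)×(K+1) matrix with diagonal entries K/(K+1) (first K) and (K+2)/(K+1) (last), off-diagonal entries 1/(K+1) in the last row and column (first K positions), and 0 elsewhere. Then for every x ∈ ℝ^{K+1}, (1 - 1/√(K+1))‖x‖² ≤ xᵀBx ≤ (1 + 1/√(K+1))‖x‖². -/

import Mathlib

theorem B_quadratic_form_bounds (K : ℕ) (hK : 1 ≤ K)
    (B : Matrix (Fin (K + 1)) (Fin (K + 1)) ℝ)
    (hB : ∀ i j : Fin (K + 1), B i j =
      if i = j then (if (i : ℕ) < K then (K : ℝ) / (K + 1) else ((K : ℝ) + 2) / (K + 1))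
      else if ((i : ℕ) < K ∧ (j : ℕ) = K) ∨ ((i : ℕ) = K ∧ (j : ℕ) < K) then 1 / ((K : ℝ) + 1)
      else 0)
    (x : Fin (K + 1) → ℝ) :
    (1 - 1 / Real.sqrt (K + 1)) * (∑ i, x i ^ 2) ≤ dotProduct x (B.mulVec x) ∧
      dotProduct x (B.mulVec x) ≤ (1 + 1 / Real.sqrt (K + 1)) * (∑ i, x i ^ 2) := by
  set t := x (Fin.last K) with ht
  set A := ∑ i : Fin K, x i.castSucc ^ 2 with hA
  set S := ∑ i : Fin K, x i.castSucc with hS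
  have hrow : ∀ i : Fin K, B.mulVec x i.castSucc
      = ((K:ℝ)/(K+1)) * x i.castSucc + (1/((K:ℝ)+1)) * t := by
    intro i
    simp only [Matrix.mulVec, dotProduct]
    rw [Fin.sum_univ_castSucc]
    have h1 : ∀ j : Fin K, B i.castSucc j.castSucc
        = if i = j then (K:ℝ)/(K+1) else 0 := by
      intro j
      rw [hB]
      simp [Fin.castSucc_inj, (Fin.castSucc_lt_last i).ne, i.isLt, j.isLt,
        Nat.ne_of_lt i.isLt, Nat.ne_of_lt j.isLt]
    have h2 : B i.castSucc (Fin.last K) = 1/((K:ℝ)+1) := by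
      rw [hB]
      simp [(Fin.castSucc_lt_last i).ne, i.isLt]
    simp [h1, h2, ite_mul, Finset.sum_ite_eq, ht]
  have hlast : B.mulVec x (Fin.last K) = (1/((K:ℝ)+1)) * S + (((K:ℝ)+2)/(K+1)) * t := by
    simp only [Matrix.mulVec, dotProduct]
    rw [Fin.sum_univ_castSucc]
    have h1 : ∀ j : Fin K, B (Fin.last K) j.castSucc = 1/((K:ℝ)+1) := by
      intro j
      rw [hB]
      simp [(Fin.castSucc_lt_last j).ne', j.isLt]
    have h2 : B (Fin.last K) (Fin.last K) = ((K:ℝ)+2)/(K+1) := by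
      rw [hB]; simp
    simp [h1, h2, ht, hS, ← Finset.mul_sum]
  have hK1 : ((K:ℝ)+1) ≠ 0 := by positivity
  have hdot : dotProduct x (B.mulVec x)
      = (A + t^2) + (1/((K:ℝ)+1)) * (t^2 - A + 2*S*t) := by
    simp only [dotProduct]
    rw [Fin.sum_univ_castSucc]
    simp only [hrow, hlast]
    rw [show (∑ i : Fin K, x i.castSucc * (((K:ℝ)/(K+1)) * x i.castSucc + (1/((K:ℝ)+1)) * t))
        = ((K:ℝ)/(K+1)) * A + (1/((K:ℝ)+1)) * t * S by
      rw [hA, hS, Finset.mul_sum, Finset.mul_sum, ← Finset.sum_add_distrib]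
      exact Finset.sum_congr rfl (fun i _ => by ring)]
    field_simp
    ring
  have hsum : (∑ i, x i ^ 2) = A + t^2 := by
    rw [Fin.sum_univ_castSucc]
  have hCS : S^2 ≤ (K:ℝ) * A := by
    have h := sq_sum_le_card_mul_sum_sq (s := (Finset.univ : Finset (Fin K)))
      (f := fun i => x i.castSucc)
    simpa [hS, hA] using h
  set r := Real.sqrt ((K:ℝ)+1) with hrdef
  have hr2 : r^2 = (K:ℝ)+1 := Real.sq_sqrt (by positivity)
  have hr1 : 1 < r := by
    have h1K : (1:ℝ) ≤ K := by exact_mod_cast hK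
    nlinarith [hr2, Real.sqrt_nonneg ((K:ℝ)+1)]
  have hAnn : 0 ≤ A := Finset.sum_nonneg (fun i _ => sq_nonneg _)
  have hkey1 : t^2 - A + 2*S*t ≤ r*(A+t^2) := by
    nlinarith [sq_nonneg ((r-1)*t - S), sq_nonneg t, hr2, hCS, hr1, hAnn]
  have hkey2 : -(r*(A+t^2)) ≤ t^2 - A + 2*S*t := by
    nlinarith [sq_nonneg ((r+1)*t + S), sq_nonneg t, hr2, hCS, hr1, hAnn]
  have hr0 : 0 < r := by linarith
  have hc0 : (0:ℝ) < 1/((K:ℝ)+1) := by positivity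
  have hrK : (1/((K:ℝ)+1)) * (r*(A+t^2)) = (1/r) * (A+t^2) := by
    rw [← hr2]; field_simp
  rw [hdot, hsum]
  constructor
  · have h := mul_le_mul_of_nonneg_left hkey2 hc0.le
    rw [sub_mul, one_mul]
    linarith [h, hrK]
  · have h := mul_le_mul_of_nonneg_left hkey1 hc0.le
    rw [add_mul, one_mul]
    linarith [h, hrK]
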